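/- For every black vertex s of BH_n with n ≥ 2, there exist two vertex-disjoint 4-cycles ⟨a_1,b_1,c_1,d_1⟩ and ⟨a_2,b_2,c_2,d_2⟩ in BH_n, where for t = 1,2 the vertices a_t and b_t are symmetric with c_t and d_t respectively, and for each t ∈ {1,2} there is a Hamiltonian cycle of BH_n containing the 5-vertex path ⟨s, a_t, b_t, c_t, d_t⟩. -/

import Mathlib

open SimpleGraph

/-- One step of the balanced-hypercube adjacency relation. -/
def bhRel (n : ℕ) (u v : Fin n → ZMod 4) : Prop :=
  ∃ (hn : 0 < n) (s : ZMod 4), (s = 1 ∨ s = -1) ∧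
    (v = Function.update u ⟨0, hn⟩ (u ⟨0, hn⟩ + s) ∨
      ∃ i : Fin n, i ≠ ⟨0, hn⟩ ∧
        v = Function.update (Function.update u ⟨0, hn⟩ (u ⟨0, hn⟩ + s)) i
              (u i + (if Even (u ⟨0, hn⟩).val then 1 else -1)))

/-- The balanced hypercube `BH n` on vertex set `{0,1,2,3}^n`. -/
def BH (n : ℕ) : SimpleGraph (Fin n → ZMod 4) :=
  SimpleGraph.fromRel (bhRel n)

/-- A vertex is white if its inner index is even. -/
def IsWhite {n : ℕ} (hn : 0 < n) (u : Fin n → ZMod 4) : Prop :=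
  Even (u ⟨0, hn⟩).val

/-- A vertex is black if its inner index is odd. -/
def IsBlack {n : ℕ} (hn : 0 < n) (u : Fin n → ZMod 4) : Prop :=
  Odd (u ⟨0, hn⟩).val

/-- Digit-difference Gray code: coordinate `i ≥ 1` holds digit `i-1` minus digit `i`
of `t` in base 4. Coordinate 0 is unused. -/
def bhGray (n : ℕ) (t : ℕ) : Fin n → ZMod 4 := fun i =>
  if i.val = 0 then 0 else ((t / 4 ^ (i.val - 1) : ℕ) : ZMod 4) - ((t / 4 ^ i.val : ℕ) : ZMod 4)

lemma bhGray_zero (n : ℕ) : bhGray n 0 = fun _ => 0 := by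
  funext i; simp [bhGray]

lemma bhGray_one (n : ℕ) (i : Fin n) :
    bhGray n 1 i = if i.val = 1 then 1 else 0 := by
  rcases i with ⟨v, hv⟩
  unfold bhGray
  rcases Nat.eq_or_lt_of_le (Nat.zero_le v) with h0 | h0
  · simp [← h0]
  rcases Nat.eq_or_lt_of_le h0 with h1 | h1
  · have : v = 1 := h1.symm
    subst this; norm_num
  · have hv1 : v ≠ 1 := by omega
    have hv0 : v ≠ 0 := by omega
    have h4 : (1 : ℕ) / 4 ^ (v - 1) = 0 := Nat.div_eq_of_lt (by
      have : 4 ^ 1 ≤ 4 ^ (v - 1) := Nat.pow_le_pow_right (by norm_num) (by omega)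
      omega)
    have h5 : (1 : ℕ) / 4 ^ v = 0 := Nat.div_eq_of_lt (by
      have : 4 ^ 1 ≤ 4 ^ v := Nat.pow_le_pow_right (by norm_num) (by omega)
      omega)
    simp [hv0, hv1, h4, h5]

/-- If all base-4 digits of `t` below position `q` are 3, then `t % 4^q = 4^q - 1`. -/
lemma bh_low_digits (t q : ℕ) (h : ∀ r, r < q → t / 4 ^ r % 4 = 3) :
    t % 4 ^ q = 4 ^ q - 1 := by
  induction q with
  | zero => simp [Nat.mod_one]
  | succ q ih =>
    have h1 : t % 4 ^ (q + 1) = t % 4 ^ q + 4 ^ q * (t / 4 ^ q % 4) := by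
      rw [pow_succ]; exact Nat.mod_mul
    have h2 : t / 4 ^ q % 4 = 3 := h q (by omega)
    rw [h2] at h1
    have h3 : t % 4 ^ q = 4 ^ q - 1 := ih (fun r hr => h r (by omega))
    have h4 : 0 < 4 ^ q := Nat.pow_pos (by norm_num)
    have h5 : (4:ℕ) ^ (q+1) = 4 ^ q * 4 := pow_succ 4 q
    omega

/-- Gray code step: adding one to `t` (cyclically) changes exactly one coordinate, by +1. -/
lemma bhGray_step (n : ℕ) (hn : 2 ≤ n) (t : ℕ) (ht : t < 4 ^ (n - 1)) :
    ∃ c : Fin n, c.val ≠ 0 ∧ ∀ i : Fin n,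
      bhGray n ((t + 1) % 4 ^ (n - 1)) i = bhGray n t i + (if i = c then 1 else 0) := by
  by_cases hlt : t + 1 < 4 ^ (n - 1)
  · -- no wrap-around
    have hex : ∃ p, t / 4 ^ p % 4 ≠ 3 := by
      refine ⟨n - 1, ?_⟩
      rw [Nat.div_eq_of_lt ht]; norm_num
    set p := Nat.find hex with hp
    have hpspec : t / 4 ^ p % 4 ≠ 3 := Nat.find_spec hex
    have hplow : ∀ r, r < p → t / 4 ^ r % 4 = 3 := by
      intro r hr
      have := Nat.find_min hex hr
      omega
    have hmodp : ∀ q, q ≤ p → t % 4 ^ q = 4 ^ q - 1 :=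
      fun q hq => bh_low_digits t q (fun r hr => hplow r (by omega))
    -- p ≤ n - 2
    have hpn : p ≤ n - 2 := by
      by_contra hcon
      have h1 : n - 1 ≤ p := by omega
      have h2 : t % 4 ^ (n-1) = 4 ^ (n-1) - 1 := hmodp (n-1) h1
      have h3 : t % 4 ^ (n-1) = t := Nat.mod_eq_of_lt ht
      omega
    -- division facts
    have hdivsucc : ∀ q, q ≤ p → (t + 1) / 4 ^ q = t / 4 ^ q + 1 := by
      intro q hq
      have h1 := Nat.div_add_mod t (4 ^ q)
      have h2 : t % 4 ^ q = 4 ^ q - 1 := hmodp q hq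
      have h4 : 0 < 4 ^ q := Nat.pow_pos (by norm_num)
      have h5 : t + 1 = 4 ^ q * (t / 4 ^ q + 1) := by
        rw [Nat.mul_succ]; omega
      rw [h5, Nat.mul_div_cancel_left _ h4]
    have hdivp1 : (t + 1) / 4 ^ (p + 1) = t / 4 ^ (p + 1) := by
      have h1 : (t+1) / 4 ^ (p+1) = ((t+1) / 4 ^ p) / 4 := by
        rw [Nat.div_div_eq_div_mul, pow_succ]
      have h2 : t / 4 ^ (p+1) = (t / 4 ^ p) / 4 := by
        rw [Nat.div_div_eq_div_mul, pow_succ]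
      rw [h1, h2, hdivsucc p le_rfl]
      have h3 : ¬ (4 ∣ (t / 4 ^ p + 1)) := by
        intro hdvd
        have : t / 4 ^ p % 4 = 3 := by omega
        exact hpspec this
      rw [Nat.succ_div_of_not_dvd h3]
    have hdivgt : ∀ q, p + 1 ≤ q → (t + 1) / 4 ^ q = t / 4 ^ q := by
      intro q hq
      have h1 : (t+1) / 4 ^ q = ((t+1) / 4 ^ (p+1)) / 4 ^ (q - (p+1)) := by
        rw [Nat.div_div_eq_div_mul, ← pow_add]; congr 2; omega
      have h2 : t / 4 ^ q = (t / 4 ^ (p+1)) / 4 ^ (q - (p+1)) := by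
        rw [Nat.div_div_eq_div_mul, ← pow_add]; congr 2; omega
      rw [h1, h2, hdivp1]
    refine ⟨⟨p + 1, by omega⟩, by simp, ?_⟩
    intro i
    rw [Nat.mod_eq_of_lt hlt]
    rcases Nat.eq_or_lt_of_le (Nat.zero_le i.val) with h0 | h0
    · have : i.val = 0 := h0.symm
      have hne : i ≠ ⟨p+1, by omega⟩ := by
        intro h; rw [h] at this; simp at this
      simp [bhGray, this, hne]
    · -- i.val ≥ 1
      have hiv : i.val ≠ 0 := by omega
      unfold bhGray
      by_cases hip : i.val = p + 1
      · have hieq : i = ⟨p+1, by omega⟩ := Fin.ext hip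
        rw [if_pos hieq, if_neg hiv, if_neg hiv]
        rw [hip]
        have e1 : (t + 1) / 4 ^ (p + 1 - 1) = t / 4 ^ (p+1-1) + 1 := by
          simpa using hdivsucc p (le_rfl)
        rw [e1, hdivp1]
        push_cast
        ring
      · have hne : i ≠ ⟨p+1, by omega⟩ := by
          intro h; apply hip; rw [h]
        rw [if_neg hne, if_neg hiv, if_neg hiv]
        by_cases hle : i.val ≤ p
        · rw [hdivsucc (i.val - 1) (by omega), hdivsucc i.val hle]
          push_cast; ring
        · rw [hdivgt (i.val - 1) (by omega), hdivgt i.val (by omega)]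
          ring
  · -- wrap-around : t = 4^(n-1) - 1
    have hN : 0 < 4 ^ (n-1) := Nat.pow_pos (by norm_num)
    have hteq : t = 4 ^ (n - 1) - 1 := by omega
    have hmod : (t + 1) % 4 ^ (n - 1) = 0 := by
      have : t + 1 = 4 ^ (n-1) := by omega
      simp [this]
    refine ⟨⟨n - 1, by omega⟩, by simp; omega, ?_⟩
    have hdiv : ∀ q, q ≤ n - 1 → t / 4 ^ q = 4 ^ (n - 1 - q) - 1 := by
      intro q hq
      have hmul : 4 ^ q * 4 ^ (n - 1 - q) = 4 ^ (n - 1) := by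
        rw [← pow_add]; congr 1; omega
      have hsub : 4 ^ q * (4 ^ (n - 1 - q) - 1) = 4 ^ (n-1) - 4 ^ q := by
        rw [Nat.mul_sub, hmul, mul_one]
      have hq4 : 0 < 4 ^ q := Nat.pow_pos (by norm_num)
      have hq4' : 0 < 4 ^ (n-1-q) := Nat.pow_pos (by norm_num)
      have hle4 : 4 ^ q ≤ 4 ^ (n-1) := Nat.pow_le_pow_right (by norm_num) (by omega)
      have : t = 4 ^ q * (4 ^ (n - 1 - q) - 1) + (4 ^ q - 1) := by omega
      rw [this, Nat.mul_add_div hq4, Nat.div_eq_of_lt (by omega)]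
      omega
    have hcast : ∀ m : ℕ, 1 ≤ m → ((4 ^ m - 1 : ℕ) : ZMod 4) = -1 := by
      intro m hm
      have h1 : 1 ≤ 4 ^ m := Nat.one_le_pow _ _ (by norm_num)
      have : ((4 ^ m - 1 : ℕ) : ZMod 4) = (4 ^ m : ℕ) - 1 := by
        push_cast [h1]; ring
      rw [this]
      have : ((4 ^ m : ℕ) : ZMod 4) = 0 := by
        push_cast
        rw [show ((4:ZMod 4)) = 0 by decide]
        exact zero_pow (by omega)
      rw [this]; ring
    intro i
    rw [hmod]
    have hz : bhGray n 0 i = 0 := by rw [bhGray_zero]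
    rw [hz]
    rcases Nat.eq_or_lt_of_le (Nat.zero_le i.val) with h0 | h0
    · have hi0 : i.val = 0 := h0.symm
      have hne : i ≠ ⟨n-1, by omega⟩ := by
        intro h; rw [h] at hi0; simp at hi0; omega
      simp [bhGray, hi0, hne]
    · have hiv : i.val ≠ 0 := by omega
      have hivle : i.val ≤ n - 1 := by have := i.isLt; omega
      unfold bhGray
      by_cases hip : i.val = n - 1
      · have hieq : i = ⟨n-1, by omega⟩ := Fin.ext hip
        rw [if_pos hieq, if_neg hiv, hip]
        rw [hdiv (n-1-1) (by omega), Nat.div_eq_of_lt (by simpa using ht)]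
        have : n - 1 - (n - 1 - 1) = 1 := by omega
        rw [this, hcast 1 le_rfl]
        norm_num
      · have hne : i ≠ ⟨n-1, by omega⟩ := by
          intro h; apply hip; rw [h]
        rw [if_neg hne, if_neg hiv]
        rw [hdiv (i.val - 1) (by omega), hdiv i.val (by omega)]
        rw [hcast (n - 1 - (i.val - 1)) (by omega), hcast (n - 1 - i.val) (by omega)]
        ring


/-- A number below `4^m` is determined by its base-4 digits. -/
lemma bh_digits_det : ∀ m t t' : ℕ, t < 4 ^ m → t' < 4 ^ m →
    (∀ q, t / 4 ^ q % 4 = t' / 4 ^ q % 4) → t = t' := by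
  intro m
  induction m with
  | zero => intro t t' ht ht' _; simp at ht ht'; omega
  | succ m ih =>
    intro t t' ht ht' h
    have h0 : t % 4 = t' % 4 := by simpa using h 0
    have hdiv : t / 4 = t' / 4 := by
      refine ih (t / 4) (t' / 4) ?_ ?_ ?_
      · have : (4:ℕ) ^ (m+1) = 4 ^ m * 4 := pow_succ 4 m
        omega
      · have : (4:ℕ) ^ (m+1) = 4 ^ m * 4 := pow_succ 4 m
        omega
      · intro q
        have := h (q + 1)
        rw [pow_succ'] at this
        rw [Nat.div_div_eq_div_mul, Nat.div_div_eq_div_mul]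
        simpa [mul_comm] using this
    omega

lemma bhGray_inj (n : ℕ) (hn : 2 ≤ n) (t t' : ℕ) (ht : t < 4 ^ (n-1)) (ht' : t' < 4 ^ (n-1))
    (h : ∀ i : Fin n, bhGray n t i = bhGray n t' i) : t = t' := by
  -- first, equality of the ZMod-casts of all quotients
  have key : ∀ d q, q + d = n - 1 → ((t / 4 ^ q : ℕ) : ZMod 4) = ((t' / 4 ^ q : ℕ) : ZMod 4) := by
    intro d
    induction d with
    | zero =>
      intro q hq
      have hq' : q = n - 1 := by omega
      rw [hq', Nat.div_eq_of_lt ht, Nat.div_eq_of_lt ht']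
    | succ d ihd =>
      intro q hq
      have hi : q + 1 < n := by omega
      have := h ⟨q + 1, hi⟩
      unfold bhGray at this
      simp only [Fin.val_mk] at this
      rw [if_neg (by omega), if_neg (by omega)] at this
      have hnext := ihd (q+1) (by omega)
      have hsq : q + 1 - 1 = q := by omega
      rw [hsq] at this
      have := sub_eq_sub_iff_add_eq_add.mp this
      rw [hnext] at this
      exact add_right_cancel this
  apply bh_digits_det (n-1) t t' ht ht'
  intro q
  by_cases hq : q ≤ n - 1
  · rcases Nat.eq_or_lt_of_le hq with hq' | hq'
    · rw [hq', Nat.div_eq_of_lt ht, Nat.div_eq_of_lt ht']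
    · have := key (n - 1 - q) q (by omega)
      have hv := congrArg ZMod.val this
      rwa [ZMod.val_natCast, ZMod.val_natCast] at hv
  · have h1 : t / 4 ^ q = 0 := Nat.div_eq_of_lt (ht.trans_le (Nat.pow_le_pow_right (by norm_num) (by omega)))
    have h2 : t' / 4 ^ q = 0 := Nat.div_eq_of_lt (ht'.trans_le (Nat.pow_le_pow_right (by norm_num) (by omega)))
    rw [h1, h2]

def bhT1 (n j : ℕ) : ℕ := (j / 4 + if j % 4 = 2 then 1 else 0) % 4 ^ (n - 1)

def bhT2 (n j : ℕ) : ℕ := (j / 4 + if j % 4 = 0 then 0 else 1) % 4 ^ (n - 1)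

def bhF1 (n : ℕ) (s : Fin n → ZMod 4) (j : ℕ) : Fin n → ZMod 4 :=
  fun i => if i.val = 0 then s i + (j : ZMod 4) else s i + bhGray n (bhT1 n j) i

def bhF2 (n : ℕ) (s : Fin n → ZMod 4) (j : ℕ) : Fin n → ZMod 4 :=
  fun i => if i.val = 0 then s i - (j : ZMod 4) else s i - bhGray n (bhT2 n j) i

lemma bhRel_of_forall1 {n : ℕ} (hn0 : 0 < n) (u v : Fin n → ZMod 4) (σ : ZMod 4)
    (hσ : σ = 1 ∨ σ = -1)
    (h : ∀ i : Fin n, v i = if i.val = 0 then u i + σ else u i) : bhRel n u v := by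
  refine ⟨hn0, σ, hσ, Or.inl ?_⟩
  funext i
  by_cases h0 : i = ⟨0, hn0⟩
  · subst h0; rw [Function.update_self]; simpa using h ⟨0, hn0⟩
  · rw [Function.update_of_ne h0]
    have hv : i.val ≠ 0 := fun hc => h0 (Fin.ext hc)
    simpa [hv] using h i

lemma bhRel_of_forall2 {n : ℕ} (hn0 : 0 < n) (u v : Fin n → ZMod 4) (σ : ZMod 4)
    (hσ : σ = 1 ∨ σ = -1) (c : Fin n) (hc : c.val ≠ 0) (ε : ZMod 4)
    (hε : ε = if Even (u ⟨0, hn0⟩).val then 1 else -1)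
    (h : ∀ i : Fin n, v i = if i.val = 0 then u i + σ else if i = c then u i + ε else u i) :
    bhRel n u v := by
  refine ⟨hn0, σ, hσ, Or.inr ⟨c, fun hcc => hc (by rw [hcc]), ?_⟩⟩
  funext i
  by_cases hic : i = c
  · subst hic; rw [Function.update_self]
    have hi := h i
    rw [if_neg hc, if_pos rfl] at hi
    rw [hi, hε]
  · rw [Function.update_of_ne hic]
    by_cases h0 : i = ⟨0, hn0⟩
    · subst h0; rw [Function.update_self]
      have hi := h ⟨0, hn0⟩
      simpa using hi
    · rw [Function.update_of_ne h0]
      have hv : i.val ≠ 0 := fun hc' => h0 (Fin.ext hc')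
      have hi := h i
      rw [if_neg hv, if_neg hic] at hi
      exact hi

lemma bh_adj_of {n : ℕ} (hn0 : 0 < n) (u v : Fin n → ZMod 4)
    (hne : v ⟨0, hn0⟩ ≠ u ⟨0, hn0⟩) (hrel : bhRel n u v) : (BH n).Adj u v := by
  rw [BH, SimpleGraph.fromRel_adj]
  exact ⟨fun h => hne (by rw [h]), Or.inl hrel⟩

lemma bh_zmod_succ_ne (z : ZMod 4) : z + 1 ≠ z := by revert z; decide

lemma bh_zmod_pred_ne (z : ZMod 4) : z - 1 ≠ z := by revert z; decide

lemma bh_even1 : ∀ z : ZMod 4, Odd z.val → Even ((z + 1).val) := by decide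

lemma bh_odd2 : ∀ z : ZMod 4, Odd z.val → ¬ Even ((z + 2).val) := by decide

lemma bh_even3 : ∀ z : ZMod 4, Odd z.val → Even ((z + 3).val) := by decide

lemma bh_odd0 : ∀ z : ZMod 4, Odd z.val → ¬ Even z.val := by decide

lemma bh_cast_mod4 (j : ℕ) (m : ℕ) (h : j % 4 = m) : ((j : ℕ) : ZMod 4) = (m : ℕ) := by
  rw [← ZMod.natCast_mod, h]

lemma bhF1_adj (n : ℕ) (hn : 2 ≤ n) (s : Fin n → ZMod 4)
    (hs : Odd (s ⟨0, Nat.lt_of_lt_of_le (by norm_num) hn⟩).val) (j : ℕ) :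
    (BH n).Adj (bhF1 n s j) (bhF1 n s (j + 1)) := by
  have hn0 : 0 < n := by omega
  have hN4 : 4 ≤ 4 ^ (n - 1) := by
    calc (4:ℕ) = 4 ^ 1 := (pow_one 4).symm
    _ ≤ 4 ^ (n-1) := Nat.pow_le_pow_right (by norm_num) (by omega)
  have hNpos : 0 < 4 ^ (n - 1) := by omega
  have hkN : j / 4 % 4 ^ (n - 1) < 4 ^ (n - 1) := Nat.mod_lt _ hNpos
  have hstepmod : (j / 4 + 1) % 4 ^ (n - 1) = (j / 4 % 4 ^ (n - 1) + 1) % 4 ^ (n - 1) := by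
    conv_lhs => rw [Nat.add_mod, Nat.mod_eq_of_lt (show 1 < 4 ^ (n-1) by omega)]
  have hu0 : bhF1 n s j ⟨0, hn0⟩ = s ⟨0, hn0⟩ + (j : ZMod 4) := by
    simp [bhF1]
  have hv0 : bhF1 n s (j+1) ⟨0, hn0⟩ = s ⟨0, hn0⟩ + (j : ZMod 4) + 1 := by
    simp only [bhF1, Fin.val_mk, if_pos rfl]
    push_cast; ring
  have hne : bhF1 n s (j+1) ⟨0, hn0⟩ ≠ bhF1 n s j ⟨0, hn0⟩ := by
    rw [hu0, hv0]; exact bh_zmod_succ_ne _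
  have hc0v : ∀ i : Fin n, i.val = 0 → ∀ w : ZMod 4,
      bhF1 n s (j+1) i = bhF1 n s j i + w → True := fun _ _ _ _ => trivial
  have hval0 : ∀ i : Fin n, i.val = 0 → bhF1 n s (j+1) i = bhF1 n s j i + 1 := by
    intro i h0
    simp only [bhF1, if_pos h0]
    push_cast; ring
  have hvaln : ∀ i : Fin n, i.val ≠ 0 →
      (bhF1 n s (j+1) i = s i + bhGray n (bhT1 n (j+1)) i ∧
       bhF1 n s j i = s i + bhGray n (bhT1 n j) i) := by
    intro i h0
    constructor <;> simp [bhF1, h0]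
  apply bh_adj_of hn0 _ _ hne
  have hm4 : j % 4 = 0 ∨ j % 4 = 1 ∨ j % 4 = 2 ∨ j % 4 = 3 := by omega
  rcases hm4 with hm | hm | hm | hm
  · -- m = 0 : same t, inner +1
    have ht : bhT1 n (j+1) = bhT1 n j := by
      unfold bhT1
      have h1 : (j+1) % 4 = 1 := by omega
      have h2 : (j+1) / 4 = j / 4 := by omega
      rw [h1, h2, hm]
      norm_num
    apply bhRel_of_forall1 hn0 _ _ 1 (Or.inl rfl)
    intro i
    by_cases h0 : i.val = 0
    · rw [if_pos h0]; exact hval0 i h0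
    · rw [if_neg h0, (hvaln i h0).1, (hvaln i h0).2, ht]
  · -- m = 1
    have htj : bhT1 n j = j / 4 % 4 ^ (n-1) := by
      unfold bhT1; rw [hm]; norm_num
    have htj1 : bhT1 n (j+1) = (j / 4 % 4 ^ (n-1) + 1) % 4 ^ (n-1) := by
      unfold bhT1
      have h1 : (j+1) % 4 = 2 := by omega
      have h2 : (j+1) / 4 = j / 4 := by omega
      rw [h1, h2, if_pos rfl, hstepmod]
    obtain ⟨c, hc0, hstep⟩ := bhGray_step n hn (j / 4 % 4 ^ (n-1)) hkN
    have hpar : Even ((bhF1 n s j ⟨0, hn0⟩).val) := by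
      rw [hu0, bh_cast_mod4 j 1 hm]
      exact bh_even1 _ hs
    apply bhRel_of_forall2 hn0 _ _ 1 (Or.inl rfl) c hc0 1 (by rw [if_pos hpar])
    intro i
    by_cases h0 : i.val = 0
    · have hic : i ≠ c := fun hcon => hc0 (by rw [← hcon]; exact h0)
      rw [if_pos h0]; exact hval0 i h0
    · rw [if_neg h0, (hvaln i h0).1, (hvaln i h0).2, htj, htj1, hstep i]
      by_cases hic : i = c
      · rw [if_pos hic, if_pos hic]; ring
      · rw [if_neg hic, if_neg hic]; ring
  · -- m = 2
    have htj : bhT1 n j = (j / 4 % 4 ^ (n-1) + 1) % 4 ^ (n-1) := by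
      unfold bhT1; rw [hm, if_pos rfl, hstepmod]
    have htj1 : bhT1 n (j+1) = j / 4 % 4 ^ (n-1) := by
      unfold bhT1
      have h1 : (j+1) % 4 = 3 := by omega
      have h2 : (j+1) / 4 = j / 4 := by omega
      rw [h1, h2]; norm_num
    obtain ⟨c, hc0, hstep⟩ := bhGray_step n hn (j / 4 % 4 ^ (n-1)) hkN
    have hpar : ¬ Even ((bhF1 n s j ⟨0, hn0⟩).val) := by
      rw [hu0, bh_cast_mod4 j 2 hm]
      exact bh_odd2 _ hs
    apply bhRel_of_forall2 hn0 _ _ 1 (Or.inl rfl) c hc0 (-1) (by rw [if_neg hpar])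
    intro i
    by_cases h0 : i.val = 0
    · rw [if_pos h0]; exact hval0 i h0
    · rw [if_neg h0, (hvaln i h0).1, (hvaln i h0).2, htj, htj1, hstep i]
      by_cases hic : i = c
      · rw [if_pos hic, if_pos hic]; ring
      · rw [if_neg hic, if_neg hic]; ring
  · -- m = 3
    have htj : bhT1 n j = j / 4 % 4 ^ (n-1) := by
      unfold bhT1; rw [hm]; norm_num
    have htj1 : bhT1 n (j+1) = (j / 4 % 4 ^ (n-1) + 1) % 4 ^ (n-1) := by
      unfold bhT1
      have h1 : (j+1) % 4 = 0 := by omega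
      have h2 : (j+1) / 4 = j / 4 + 1 := by omega
      rw [h1, h2]
      simp only [if_neg (by norm_num : ¬(0:ℕ) = 2)]
      simpa using hstepmod
    obtain ⟨c, hc0, hstep⟩ := bhGray_step n hn (j / 4 % 4 ^ (n-1)) hkN
    have hpar : Even ((bhF1 n s j ⟨0, hn0⟩).val) := by
      rw [hu0, bh_cast_mod4 j 3 hm]
      exact bh_even3 _ hs
    apply bhRel_of_forall2 hn0 _ _ 1 (Or.inl rfl) c hc0 1 (by rw [if_pos hpar])
    intro i
    by_cases h0 : i.val = 0
    · rw [if_pos h0]; exact hval0 i h0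
    · rw [if_neg h0, (hvaln i h0).1, (hvaln i h0).2, htj, htj1, hstep i]
      by_cases hic : i = c
      · rw [if_pos hic, if_pos hic]; ring
      · rw [if_neg hic, if_neg hic]; ring

lemma bhF2_adj (n : ℕ) (hn : 2 ≤ n) (s : Fin n → ZMod 4)
    (hs : Odd (s ⟨0, Nat.lt_of_lt_of_le (by norm_num) hn⟩).val) (j : ℕ) :
    (BH n).Adj (bhF2 n s j) (bhF2 n s (j + 1)) := by
  have hn0 : 0 < n := by omega
  have hN4 : 4 ≤ 4 ^ (n - 1) := by
    calc (4:ℕ) = 4 ^ 1 := (pow_one 4).symm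
    _ ≤ 4 ^ (n-1) := Nat.pow_le_pow_right (by norm_num) (by omega)
  have hNpos : 0 < 4 ^ (n - 1) := by omega
  have hkN : j / 4 % 4 ^ (n - 1) < 4 ^ (n - 1) := Nat.mod_lt _ hNpos
  have hstepmod : (j / 4 + 1) % 4 ^ (n - 1) = (j / 4 % 4 ^ (n - 1) + 1) % 4 ^ (n - 1) := by
    conv_lhs => rw [Nat.add_mod, Nat.mod_eq_of_lt (show 1 < 4 ^ (n-1) by omega)]
  have hu0 : bhF2 n s j ⟨0, hn0⟩ = s ⟨0, hn0⟩ - (j : ZMod 4) := by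
    simp [bhF2]
  have hv0 : bhF2 n s (j+1) ⟨0, hn0⟩ = s ⟨0, hn0⟩ - (j : ZMod 4) - 1 := by
    simp only [bhF2, Fin.val_mk, if_pos rfl]
    push_cast; ring
  have hne : bhF2 n s (j+1) ⟨0, hn0⟩ ≠ bhF2 n s j ⟨0, hn0⟩ := by
    rw [hu0, hv0]; exact bh_zmod_pred_ne _
  have hval0 : ∀ i : Fin n, i.val = 0 → bhF2 n s (j+1) i = bhF2 n s j i + (-1) := by
    intro i h0
    simp only [bhF2, if_pos h0]
    push_cast; ring
  have hvaln : ∀ i : Fin n, i.val ≠ 0 →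
      (bhF2 n s (j+1) i = s i - bhGray n (bhT2 n (j+1)) i ∧
       bhF2 n s j i = s i - bhGray n (bhT2 n j) i) := by
    intro i h0
    constructor <;> simp [bhF2, h0]
  apply bh_adj_of hn0 _ _ hne
  have hm4 : j % 4 = 0 ∨ j % 4 = 1 ∨ j % 4 = 2 ∨ j % 4 = 3 := by omega
  rcases hm4 with hm | hm | hm | hm
  · -- m = 0 : t steps, inner -1, outer -e_c, u0 odd
    have htj : bhT2 n j = j / 4 % 4 ^ (n-1) := by
      unfold bhT2; rw [hm]; norm_num
    have htj1 : bhT2 n (j+1) = (j / 4 % 4 ^ (n-1) + 1) % 4 ^ (n-1) := by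
      unfold bhT2
      have h1 : (j+1) % 4 = 1 := by omega
      have h2 : (j+1) / 4 = j / 4 := by omega
      rw [h1, h2]
      simp only [if_neg (by norm_num : ¬(1:ℕ) = 0)]
      exact hstepmod
    obtain ⟨c, hc0, hstep⟩ := bhGray_step n hn (j / 4 % 4 ^ (n-1)) hkN
    have hpar : ¬ Even ((bhF2 n s j ⟨0, hn0⟩).val) := by
      rw [hu0, bh_cast_mod4 j 0 hm]
      push_cast
      simpa using bh_odd0 _ hs
    apply bhRel_of_forall2 hn0 _ _ (-1) (Or.inr rfl) c hc0 (-1) (by rw [if_neg hpar])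
    intro i
    by_cases h0 : i.val = 0
    · rw [if_pos h0]
      exact hval0 i h0
    · rw [if_neg h0, (hvaln i h0).1, (hvaln i h0).2, htj, htj1, hstep i]
      by_cases hic : i = c
      · rw [if_pos hic, if_pos hic]; ring
      · rw [if_neg hic, if_neg hic]; ring
  all_goals {
    have ht : bhT2 n (j+1) = bhT2 n j := by
      unfold bhT2
      rcases (by omega : ((j+1) % 4 ≠ 0 ∧ (j+1)/4 = j/4) ∨
          ((j+1) % 4 = 0 ∧ (j+1)/4 = j/4 + 1)) with ⟨ha, hb⟩ | ⟨ha, hb⟩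
      · rw [hb, if_neg ha, if_neg (show ¬ j % 4 = 0 by omega)]
      · rw [hb, if_pos ha, if_neg (show ¬ j % 4 = 0 by omega)]
    apply bhRel_of_forall1 hn0 _ _ (-1) (Or.inr rfl)
    intro i
    by_cases h0 : i.val = 0
    · rw [if_pos h0]
      exact hval0 i h0
    · rw [if_neg h0, (hvaln i h0).1, (hvaln i h0).2, ht] }

lemma bh_mod_cancel {N a b : ℕ} (hN : 0 < N) (ha : a < N) (hb : b < N)
    (h : (a + 1) % N = (b + 1) % N) : a = b := by
  rcases Nat.lt_or_ge (a+1) N with h1 | h1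
  · rw [Nat.mod_eq_of_lt h1] at h
    rcases Nat.lt_or_ge (b+1) N with h2 | h2
    · rw [Nat.mod_eq_of_lt h2] at h; omega
    · have hbN : b + 1 = N := by omega
      rw [hbN, Nat.mod_self] at h; omega
  · have haN : a + 1 = N := by omega
    rw [haN, Nat.mod_self] at h
    rcases Nat.lt_or_ge (b+1) N with h2 | h2
    · rw [Nat.mod_eq_of_lt h2] at h; omega
    · omega

lemma bhF1_inj (n : ℕ) (hn : 2 ≤ n) (s : Fin n → ZMod 4) (j j' : ℕ)
    (hj : j < 4 ^ n) (hj' : j' < 4 ^ n) (h : bhF1 n s j = bhF1 n s j') : j = j' := by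
  have hn0 : 0 < n := by omega
  have hpow : 4 ^ n = 4 ^ (n-1) * 4 := by
    rw [← pow_succ]; congr 1; omega
  have hNpos : 0 < 4 ^ (n-1) := Nat.pow_pos (by norm_num)
  -- inner: j % 4 = j' % 4
  have h0 := congrFun h ⟨0, hn0⟩
  simp only [bhF1, Fin.val_mk, if_pos rfl] at h0
  have hcast : ((j : ℕ) : ZMod 4) = ((j' : ℕ) : ZMod 4) := by
    have := add_left_cancel h0
    exact this
  have hmod4 : j % 4 = j' % 4 := by
    have := (ZMod.natCast_eq_natCast_iff _ _ _).mp hcast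
    simpa [Nat.ModEq] using this
  -- outer
  have hdiv : j / 4 < 4 ^ (n-1) := by omega
  have hdiv' : j' / 4 < 4 ^ (n-1) := by omega
  have hgray : ∀ i : Fin n, bhGray n (bhT1 n j) i = bhGray n (bhT1 n j') i := by
    intro i
    by_cases hi : i.val = 0
    · simp [bhGray, hi]
    · have hh := congrFun h i
      simp only [bhF1, if_neg hi] at hh
      exact add_left_cancel hh
  have hTlt : bhT1 n j < 4 ^ (n-1) := Nat.mod_lt _ hNpos
  have hTlt' : bhT1 n j' < 4 ^ (n-1) := Nat.mod_lt _ hNpos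
  have hT := bhGray_inj n hn _ _ hTlt hTlt' hgray
  unfold bhT1 at hT
  rw [hmod4] at hT
  have hdiveq : j / 4 = j' / 4 := by
    by_cases h2 : j' % 4 = 2
    · rw [if_pos h2] at hT
      have e1 : (j / 4 + 1) % 4 ^ (n-1) = (j' / 4 + 1) % 4 ^ (n-1) := hT
      exact bh_mod_cancel hNpos hdiv hdiv' e1
    · rw [if_neg h2] at hT
      rw [Nat.add_zero, Nat.add_zero, Nat.mod_eq_of_lt hdiv, Nat.mod_eq_of_lt hdiv'] at hT
      exact hT
  omega

lemma bhF2_inj (n : ℕ) (hn : 2 ≤ n) (s : Fin n → ZMod 4) (j j' : ℕ)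
    (hj : j < 4 ^ n) (hj' : j' < 4 ^ n) (h : bhF2 n s j = bhF2 n s j') : j = j' := by
  have hn0 : 0 < n := by omega
  have hpow : 4 ^ n = 4 ^ (n-1) * 4 := by
    rw [← pow_succ]; congr 1; omega
  have hNpos : 0 < 4 ^ (n-1) := Nat.pow_pos (by norm_num)
  have h0 := congrFun h ⟨0, hn0⟩
  simp only [bhF2, Fin.val_mk, if_pos rfl] at h0
  have hcast : ((j : ℕ) : ZMod 4) = ((j' : ℕ) : ZMod 4) := by
    have h1 : s ⟨0,hn0⟩ - (j : ZMod 4) = s ⟨0,hn0⟩ - (j' : ZMod 4) := h0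
    exact sub_right_injective h1
  have hmod4 : j % 4 = j' % 4 := by
    have := (ZMod.natCast_eq_natCast_iff _ _ _).mp hcast
    simpa [Nat.ModEq] using this
  have hdiv : j / 4 < 4 ^ (n-1) := by omega
  have hdiv' : j' / 4 < 4 ^ (n-1) := by omega
  have hgray : ∀ i : Fin n, bhGray n (bhT2 n j) i = bhGray n (bhT2 n j') i := by
    intro i
    by_cases hi : i.val = 0
    · simp [bhGray, hi]
    · have hh := congrFun h i
      simp only [bhF2, if_neg hi] at hh
      have : s i - bhGray n (bhT2 n j) i = s i - bhGray n (bhT2 n j') i := hh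
      exact sub_right_injective this
  have hTlt : bhT2 n j < 4 ^ (n-1) := Nat.mod_lt _ hNpos
  have hTlt' : bhT2 n j' < 4 ^ (n-1) := Nat.mod_lt _ hNpos
  have hT := bhGray_inj n hn _ _ hTlt hTlt' hgray
  unfold bhT2 at hT
  rw [hmod4] at hT
  have hdiveq : j / 4 = j' / 4 := by
    by_cases h2 : j' % 4 = 0
    · rw [if_pos h2] at hT
      rw [Nat.add_zero, Nat.add_zero, Nat.mod_eq_of_lt hdiv, Nat.mod_eq_of_lt hdiv'] at hT
      exact hT
    · rw [if_neg h2] at hT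
      exact bh_mod_cancel hNpos hdiv hdiv' hT
  omega

lemma bhF1_per (n : ℕ) (hn : 2 ≤ n) (s : Fin n → ZMod 4) (j : ℕ) :
    bhF1 n s (j + 4 ^ n) = bhF1 n s j := by
  have hpow : 4 ^ n = 4 ^ (n-1) * 4 := by
    rw [← pow_succ]; congr 1; omega
  have hcast : ((4 ^ n : ℕ) : ZMod 4) = 0 := by
    push_cast
    rw [show ((4:ZMod 4)) = 0 by decide]
    exact zero_pow (by omega)
  have hT : bhT1 n (j + 4 ^ n) = bhT1 n j := by
    unfold bhT1
    have h1 : (j + 4 ^ n) % 4 = j % 4 := by omega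
    have h2 : (j + 4 ^ n) / 4 = j / 4 + 4 ^ (n-1) := by omega
    rw [h1, h2]
    have h3 : j / 4 + 4 ^ (n-1) + (if j % 4 = 2 then 1 else 0)
        = j / 4 + (if j % 4 = 2 then 1 else 0) + 4 ^ (n-1) := by omega
    rw [h3, Nat.add_mod_right]
  funext i
  by_cases hi : i.val = 0
  · simp only [bhF1, if_pos hi]
    push_cast [hcast]
    ring
  · simp only [bhF1, if_neg hi, hT]

lemma bhF2_per (n : ℕ) (hn : 2 ≤ n) (s : Fin n → ZMod 4) (j : ℕ) :
    bhF2 n s (j + 4 ^ n) = bhF2 n s j := by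
  have hpow : 4 ^ n = 4 ^ (n-1) * 4 := by
    rw [← pow_succ]; congr 1; omega
  have hT : bhT2 n (j + 4 ^ n) = bhT2 n j := by
    unfold bhT2
    have h1 : (j + 4 ^ n) % 4 = j % 4 := by omega
    have h2 : (j + 4 ^ n) / 4 = j / 4 + 4 ^ (n-1) := by omega
    rw [h1, h2]
    have h3 : j / 4 + 4 ^ (n-1) + (if j % 4 = 0 then 0 else 1)
        = j / 4 + (if j % 4 = 0 then 0 else 1) + 4 ^ (n-1) := by omega
    rw [h3, Nat.add_mod_right]
  have hcast : ((4 ^ n : ℕ) : ZMod 4) = 0 := by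
    push_cast
    rw [show ((4:ZMod 4)) = 0 by decide]
    exact zero_pow (by omega)
  funext i
  by_cases hi : i.val = 0
  · simp only [bhF2, if_pos hi]
    push_cast [hcast]
    ring
  · simp only [bhF2, if_neg hi, hT]

section WalkMachinery

variable {V : Type*} {G : SimpleGraph V}

/-- Walk along a sequence of pairwise-adjacent vertices. -/
def bhWalk (f : ℕ → V) (hf : ∀ j, G.Adj (f j) (f (j+1))) : (a l : ℕ) → G.Walk (f a) (f (a + l))
  | _, 0 => SimpleGraph.Walk.nil
  | a, l+1 =>
      (SimpleGraph.Walk.cons (hf a) (bhWalk f hf (a+1) l)).copy rfl (by congr 1; omega)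

lemma bhWalk_support (f : ℕ → V) (hf : ∀ j, G.Adj (f j) (f (j+1))) :
    ∀ l a, (bhWalk f hf a l).support = (List.range (l+1)).map (fun t => f (a+t)) := by
  intro l
  induction l with
  | zero =>
    intro a
    rw [show (List.range 1) = [0] from rfl]
    simp [bhWalk]
  | succ l ih =>
    intro a
    show ((SimpleGraph.Walk.cons (hf a) (bhWalk f hf (a+1) l)).copy rfl (by congr 1; omega)).support = _
    rw [SimpleGraph.Walk.support_copy, SimpleGraph.Walk.support_cons, ih (a+1)]
    have hfun : (fun t => f (a+1+t)) = ((fun t => f (a+t)) ∘ Nat.succ) := by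
      funext t
      show f (a+1+t) = f (a + Nat.succ t)
      congr 1; omega
    calc f a :: List.map (fun t => f (a+1+t)) (List.range (l+1))
        = List.map (fun t => f (a+t)) (0 :: List.map Nat.succ (List.range (l+1))) := by
          rw [List.map_cons, hfun, List.map_map]
          norm_num
      _ = _ := by rw [← List.range_succ_eq_map]

lemma bhWalk_edges (f : ℕ → V) (hf : ∀ j, G.Adj (f j) (f (j+1))) :
    ∀ l a, (bhWalk f hf a l).edges
      = (List.range l).map (fun t => s(f (a+t), f (a+t+1))) := by
  intro l
  induction l with
  | zero => intro a; simp [bhWalk]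
  | succ l ih =>
    intro a
    show ((SimpleGraph.Walk.cons (hf a) (bhWalk f hf (a+1) l)).copy rfl (by congr 1; omega)).edges = _
    rw [SimpleGraph.Walk.edges_copy, SimpleGraph.Walk.edges_cons, ih (a+1)]
    have hfun : (fun t => s(f (a+1+t), f (a+1+t+1)))
        = ((fun t => s(f (a+t), f (a+t+1))) ∘ Nat.succ) := by
      funext t
      show s(f (a+1+t), f (a+1+t+1)) = s(f (a + Nat.succ t), f (a + Nat.succ t + 1))
      have h1 : a + 1 + t = a + Nat.succ t := by omega
      rw [h1]
    calc s(f a, f (a+1)) :: List.map (fun t => s(f (a+1+t), f (a+1+t+1))) (List.range l)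
        = List.map (fun t => s(f (a+t), f (a+t+1))) (0 :: List.map Nat.succ (List.range l)) := by
          rw [List.map_cons, hfun, List.map_map]
          norm_num
      _ = _ := by rw [← List.range_succ_eq_map]

lemma bh_ham_of [Fintype V] [DecidableEq V]
    (f : ℕ → V) (hf : ∀ j, G.Adj (f j) (f (j+1))) (L : ℕ) (hL : 16 ≤ L)
    (hcard : Fintype.card V = L)
    (hper : f L = f 0)
    (hinj : ∀ j j', j < L → j' < L → f j = f j' → j = j') :
    ∃ H : G.Walk (f 0) (f 0), H.IsHamiltonianCycle ∧
      H.support = (List.range (L+1)).map f := by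
  have hend : f (1 + (L-1)) = f 0 := by
    rw [show 1 + (L-1) = L by omega, hper]
  set p : G.Walk (f 1) (f 0) := (bhWalk f hf 1 (L-1)).copy rfl hend with hp
  have hpsupp : p.support = (List.range L).map (fun t => f (1+t)) := by
    rw [hp, SimpleGraph.Walk.support_copy, bhWalk_support]
    have hLL : L - 1 + 1 = L := by omega
    rw [hLL]
  have hpedges : p.edges = (List.range (L-1)).map (fun t => s(f (1+t), f (1+t+1))) := by
    rw [hp, SimpleGraph.Walk.edges_copy, bhWalk_edges]
  -- injectivity of t ↦ f (1+t) on range L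
  have hinj1 : ∀ t t', t < L → t' < L → f (1+t) = f (1+t') → t = t' := by
    intro t t' ht ht' heq
    by_cases h1 : 1 + t < L <;> by_cases h2 : 1 + t' < L
    · have := hinj _ _ h1 h2 heq; omega
    · have ht'L : 1 + t' = L := by omega
      rw [ht'L, hper] at heq
      have := hinj _ _ h1 (by omega : (0:ℕ) < L) heq
      omega
    · have htL : 1 + t = L := by omega
      rw [htL, hper] at heq
      have := hinj _ _ (by omega : (0:ℕ) < L) h2 heq
      omega
    · omega
  have hnodup : p.support.Nodup := by
    rw [hpsupp]
    refine List.Nodup.map_on ?_ List.nodup_range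
    intro x hx y hy hxy
    exact hinj1 x y (List.mem_range.mp hx) (List.mem_range.mp hy) hxy
  have hpath : p.IsPath := SimpleGraph.Walk.IsPath.mk' hnodup
  have hedge : s(f 0, f 1) ∉ p.edges := by
    rw [hpedges]
    intro hmem
    rw [List.mem_map] at hmem
    obtain ⟨t, ht, heq⟩ := hmem
    rw [List.mem_range] at ht
    rw [Sym2.eq_iff] at heq
    rcases heq with ⟨h1, h2⟩ | ⟨h1, h2⟩
    · -- f (1+t) = f 0
      have := hinj _ _ (by omega) (by omega) h1
      omega
    · -- f (1+t) = f 1 and f (1+t+1) = f 0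
      have ht0 : t = 0 := by
        have := hinj _ _ (by omega) (by omega) h1
        omega
      subst ht0
      have := hinj _ _ (by omega) (by omega) h2
      omega
  set H : G.Walk (f 0) (f 0) := SimpleGraph.Walk.cons (hf 0) p with hH
  have hHsupp : H.support = (List.range (L+1)).map f := by
    rw [hH, SimpleGraph.Walk.support_cons, hpsupp]
    rw [List.range_succ_eq_map, List.map_cons, List.map_map]
    congr 1
    apply List.map_congr_left
    intro t _
    show f (1 + t) = f (Nat.succ t)
    congr 1; omega
  have hcyc : H.IsCycle := by
    rw [hH]
    exact (SimpleGraph.Walk.cons_isCycle_iff p (hf 0)).mpr ⟨hpath, hedge⟩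
  refine ⟨H, ?_, hHsupp⟩
  rw [SimpleGraph.Walk.isHamiltonianCycle_iff_isCycle_and_support_count_tail_eq_one]
  refine ⟨hcyc, ?_⟩
  intro v
  have htail : H.support.tail = p.support := by
    rw [hH, SimpleGraph.Walk.support_cons, List.tail_cons]
  rw [htail]
  -- membership via surjectivity
  have hsurj : ∃ t, t < L ∧ f (1+t) = v := by
    have hbij : Function.Bijective (fun x : Fin L => f (1 + x.val)) := by
      rw [Fintype.bijective_iff_injective_and_card]
      constructor
      · intro x y hxy
        exact Fin.ext (hinj1 x.val y.val x.isLt y.isLt hxy)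
      · rw [Fintype.card_fin, hcard]
    obtain ⟨x, hx⟩ := hbij.surjective v
    exact ⟨x.val, x.isLt, hx⟩
  obtain ⟨t, ht, hv⟩ := hsurj
  have hmem : v ∈ p.support := by
    rw [hpsupp, List.mem_map]
    exact ⟨t, List.mem_range.mpr ht, hv⟩
  exact List.count_eq_one_of_mem hnodup hmem

end WalkMachinery

-- decidable facts about `ZMod 4`
lemma bhz1 : ∀ z : ZMod 4, z + 1 = z + 4 + 1 := by decide
lemma bhz2 : ∀ z : ZMod 4, Odd z.val → ¬ Even ((z + 4).val) := by decide
lemma bhz3 : ∀ z : ZMod 4, z + 1 ≠ z + 4 := by decide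
lemma bhz4 : ∀ z : ZMod 4, z - 1 = z - 4 + -1 := by decide
lemma bhz5 : ∀ z : ZMod 4, z - 1 ≠ z - 4 := by decide
lemma bhz6 : ∀ z : ZMod 4, ¬ (z - 1 = z) := by decide
lemma bhz7 : ∀ z : ZMod 4, ¬ (z - 1 = z + 1) := by decide
lemma bhz8 : ∀ z : ZMod 4, z - 3 = z - 1 + 2 := by decide
lemma bhz9 : ∀ z : ZMod 4, z - 4 = z - 2 + 2 := by decide
lemma bhz10 : ∀ z : ZMod 4, z + 3 = z + 1 + 2 := by decide
lemma bhz11 : ∀ z : ZMod 4, z + 4 = z + 2 + 2 := by decide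

/-- For every black vertex `s` of `BH n` (`n ≥ 2`) there are two vertex-disjoint
4-cycles `⟨a_t,b_t,c_t,d_t⟩` (`t = 1,2`), where `c_t`, `d_t` are the symmetric pairs
of `a_t`, `b_t`, and for each `t` some Hamiltonian cycle of `BH n` contains the
5-vertex path `⟨s,a_t,b_t,c_t,d_t⟩`. -/
theorem BH_five_path_lemma (n : ℕ) (hn : 2 ≤ n) (s : Fin n → ZMod 4)
    (hs : IsBlack (by omega) s) :
    ∃ a₁ b₁ c₁ d₁ a₂ b₂ c₂ d₂ : Fin n → ZMod 4,
      (∃ C₁ : (BH n).Walk a₁ a₁, C₁.IsCycle ∧ C₁.support = [a₁, b₁, c₁, d₁, a₁]) ∧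
      (∃ C₂ : (BH n).Walk a₂ a₂, C₂.IsCycle ∧ C₂.support = [a₂, b₂, c₂, d₂, a₂]) ∧
      ({a₁, b₁, c₁, d₁} : Set (Fin n → ZMod 4)) ∩ {a₂, b₂, c₂, d₂} = ∅ ∧
      c₁ = Function.update a₁ ⟨0, by omega⟩ (a₁ ⟨0, by omega⟩ + 2) ∧
      d₁ = Function.update b₁ ⟨0, by omega⟩ (b₁ ⟨0, by omega⟩ + 2) ∧
      c₂ = Function.update a₂ ⟨0, by omega⟩ (a₂ ⟨0, by omega⟩ + 2) ∧
      d₂ = Function.update b₂ ⟨0, by omega⟩ (b₂ ⟨0, by omega⟩ + 2) ∧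
      (∃ H₁ : (BH n).Walk s s, H₁.IsHamiltonianCycle ∧
        [s, a₁, b₁, c₁, d₁] <+: H₁.support) ∧
      (∃ H₂ : (BH n).Walk s s, H₂.IsHamiltonianCycle ∧
        [s, a₂, b₂, c₂, d₂] <+: H₂.support) := by
  have hn0 : 0 < n := by omega
  have hN4 : 4 ≤ 4 ^ (n - 1) := by
    calc (4:ℕ) = 4 ^ 1 := (pow_one 4).symm
    _ ≤ 4 ^ (n-1) := Nat.pow_le_pow_right (by norm_num) (by omega)
  have h1N : (1:ℕ) % 4 ^ (n-1) = 1 := Nat.mod_eq_of_lt (by omega)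
  have hs' : Odd (s ⟨0, hn0⟩).val := hs
  have hi1v : (⟨1, by omega⟩ : Fin n).val = 1 := rfl
  -- t-values
  have hT1_0 : bhT1 n 0 = 0 := by unfold bhT1; norm_num
  have hT1_1 : bhT1 n 1 = 0 := by unfold bhT1; norm_num
  have hT1_2 : bhT1 n 2 = 1 := by unfold bhT1; norm_num [h1N]
  have hT1_3 : bhT1 n 3 = 0 := by unfold bhT1; norm_num
  have hT1_4 : bhT1 n 4 = 1 := by unfold bhT1; norm_num [h1N]
  have hT2_0 : bhT2 n 0 = 0 := by unfold bhT2; norm_num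
  have hT2_1 : bhT2 n 1 = 1 := by unfold bhT2; norm_num [h1N]
  have hT2_2 : bhT2 n 2 = 1 := by unfold bhT2; norm_num [h1N]
  have hT2_3 : bhT2 n 3 = 1 := by unfold bhT2; norm_num [h1N]
  have hT2_4 : bhT2 n 4 = 1 := by unfold bhT2; norm_num [h1N]
  -- value extractors
  have hF1at0 : ∀ (j : ℕ) (i : Fin n), i.val = 0 → bhF1 n s j i = s i + (j : ZMod 4) := by
    intro j i hi; simp [bhF1, hi]
  have hF1out : ∀ (j : ℕ) (i : Fin n), i.val ≠ 0 →
      bhF1 n s j i = s i + bhGray n (bhT1 n j) i := by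
    intro j i hi; simp [bhF1, hi]
  have hF2at0 : ∀ (j : ℕ) (i : Fin n), i.val = 0 → bhF2 n s j i = s i - (j : ZMod 4) := by
    intro j i hi; simp [bhF2, hi]
  have hF2out : ∀ (j : ℕ) (i : Fin n), i.val ≠ 0 →
      bhF2 n s j i = s i - bhGray n (bhT2 n j) i := by
    intro j i hi; simp [bhF2, hi]
  have hF1_0 : bhF1 n s 0 = s := by
    funext i
    by_cases hi : i.val = 0
    · rw [hF1at0 0 i hi]; norm_num
    · rw [hF1out 0 i hi, hT1_0, bhGray_zero]; norm_num
  have hF2_0 : bhF2 n s 0 = s := by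
    funext i
    by_cases hi : i.val = 0
    · rw [hF2at0 0 i hi]; norm_num
    · rw [hF2out 0 i hi, hT2_0, bhGray_zero]; norm_num
  -- distinctness helpers
  have hneF1 : ∀ j j' : ℕ, ((j : ZMod 4) ≠ (j' : ZMod 4)) → bhF1 n s j ≠ bhF1 n s j' := by
    intro j j' hjj hcon
    apply hjj
    have h := congrFun hcon ⟨0, hn0⟩
    rw [hF1at0 j _ rfl, hF1at0 j' _ rfl] at h
    exact add_left_cancel h
  have hneF2 : ∀ j j' : ℕ, ((j : ZMod 4) ≠ (j' : ZMod 4)) → bhF2 n s j ≠ bhF2 n s j' := by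
    intro j j' hjj hcon
    apply hjj
    have h := congrFun hcon ⟨0, hn0⟩
    rw [hF2at0 j _ rfl, hF2at0 j' _ rfl] at h
    exact sub_right_injective h
  refine ⟨bhF1 n s 1, bhF1 n s 2, bhF1 n s 3, bhF1 n s 4,
         bhF2 n s 1, bhF2 n s 2, bhF2 n s 3, bhF2 n s 4, ?_, ?_, ?_, ?_, ?_, ?_, ?_, ?_, ?_⟩
  · -- the 4-cycle C₁
    have e1 : (BH n).Adj (bhF1 n s 1) (bhF1 n s 2) := bhF1_adj n hn s hs' 1
    have e2 : (BH n).Adj (bhF1 n s 2) (bhF1 n s 3) := bhF1_adj n hn s hs' 2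
    have e3 : (BH n).Adj (bhF1 n s 3) (bhF1 n s 4) := bhF1_adj n hn s hs' 3
    have e4 : (BH n).Adj (bhF1 n s 4) (bhF1 n s 1) := by
      apply bh_adj_of hn0
      · rw [hF1at0 1 _ rfl, hF1at0 4 _ rfl]
        push_cast
        exact bhz3 _
      · refine bhRel_of_forall2 hn0 _ _ 1 (Or.inl rfl) ⟨1, by omega⟩ (by rw [hi1v]; omega)
          (-1) ?_ ?_
        · rw [if_neg]
          rw [hF1at0 4 _ rfl]
          push_cast
          exact bhz2 _ hs'
        · intro i
          by_cases hi : i.val = 0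
          · rw [if_pos hi, hF1at0 1 i hi, hF1at0 4 i hi]
            push_cast
            exact bhz1 _
          · rw [if_neg hi, hF1out 1 i hi, hF1out 4 i hi, hT1_1, hT1_4, bhGray_zero,
              bhGray_one]
            by_cases hic : i = ⟨1, by omega⟩
            · have hiv1 : i.val = 1 := by rw [hic]
              rw [if_pos hic, if_pos hiv1]
              ring
            · have hiv1 : i.val ≠ 1 := fun hc => hic (Fin.ext (by rw [hc, hi1v]))
              rw [if_neg hic, if_neg hiv1]
    have hAB : bhF1 n s 1 ≠ bhF1 n s 2 := hneF1 1 2 (by decide)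
    have hAC : bhF1 n s 1 ≠ bhF1 n s 3 := hneF1 1 3 (by decide)
    have hAD : bhF1 n s 1 ≠ bhF1 n s 4 := hneF1 1 4 (by decide)
    have hBC : bhF1 n s 2 ≠ bhF1 n s 3 := hneF1 2 3 (by decide)
    have hBD : bhF1 n s 2 ≠ bhF1 n s 4 := hneF1 2 4 (by decide)
    have hCD : bhF1 n s 3 ≠ bhF1 n s 4 := hneF1 3 4 (by decide)
    refine ⟨SimpleGraph.Walk.cons e1 (SimpleGraph.Walk.cons e2 (SimpleGraph.Walk.cons e3
      (SimpleGraph.Walk.cons e4 SimpleGraph.Walk.nil))), ?_, ?_⟩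
    · rw [SimpleGraph.Walk.isCycle_def]
      refine ⟨?_, by simp, ?_⟩
      · rw [SimpleGraph.Walk.isTrail_def]
        simp [Sym2.eq_iff, hAB, hAC, hAD, hBC, hBD, hCD,
          hAB.symm, hAC.symm, hAD.symm, hBC.symm, hBD.symm, hCD.symm]
      · simp [hAB.symm, hBC, hBD, hCD, hAC.symm, hAD.symm]
    · simp
  · -- the 4-cycle C₂
    have e1 : (BH n).Adj (bhF2 n s 1) (bhF2 n s 2) := bhF2_adj n hn s hs' 1
    have e2 : (BH n).Adj (bhF2 n s 2) (bhF2 n s 3) := bhF2_adj n hn s hs' 2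
    have e3 : (BH n).Adj (bhF2 n s 3) (bhF2 n s 4) := bhF2_adj n hn s hs' 3
    have e4 : (BH n).Adj (bhF2 n s 4) (bhF2 n s 1) := by
      apply bh_adj_of hn0
      · rw [hF2at0 1 _ rfl, hF2at0 4 _ rfl]
        push_cast
        exact bhz5 _
      · refine bhRel_of_forall1 hn0 _ _ (-1) (Or.inr rfl) ?_
        intro i
        by_cases hi : i.val = 0
        · rw [if_pos hi, hF2at0 1 i hi, hF2at0 4 i hi]
          push_cast
          exact bhz4 _
        · rw [if_neg hi, hF2out 1 i hi, hF2out 4 i hi, hT2_1, hT2_4]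
    have hAB : bhF2 n s 1 ≠ bhF2 n s 2 := hneF2 1 2 (by decide)
    have hAC : bhF2 n s 1 ≠ bhF2 n s 3 := hneF2 1 3 (by decide)
    have hAD : bhF2 n s 1 ≠ bhF2 n s 4 := hneF2 1 4 (by decide)
    have hBC : bhF2 n s 2 ≠ bhF2 n s 3 := hneF2 2 3 (by decide)
    have hBD : bhF2 n s 2 ≠ bhF2 n s 4 := hneF2 2 4 (by decide)
    have hCD : bhF2 n s 3 ≠ bhF2 n s 4 := hneF2 3 4 (by decide)
    refine ⟨SimpleGraph.Walk.cons e1 (SimpleGraph.Walk.cons e2 (SimpleGraph.Walk.cons e3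
      (SimpleGraph.Walk.cons e4 SimpleGraph.Walk.nil))), ?_, ?_⟩
    · rw [SimpleGraph.Walk.isCycle_def]
      refine ⟨?_, by simp, ?_⟩
      · rw [SimpleGraph.Walk.isTrail_def]
        simp [Sym2.eq_iff, hAB, hAC, hAD, hBC, hBD, hCD,
          hAB.symm, hAC.symm, hAD.symm, hBC.symm, hBD.symm, hCD.symm]
      · simp [hAB.symm, hBC, hBD, hCD, hAC.symm, hAD.symm]
    · simp
  · -- disjointness
    have hv1A : bhF1 n s 1 ⟨1, by omega⟩ = s ⟨1, by omega⟩ := by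
      rw [hF1out 1 _ (by rw [hi1v]; omega), hT1_1, bhGray_zero]; norm_num
    have hv1B : bhF1 n s 2 ⟨1, by omega⟩ = s ⟨1, by omega⟩ + 1 := by
      rw [hF1out 2 _ (by rw [hi1v]; omega), hT1_2, bhGray_one, if_pos hi1v]
    have hv1C : bhF1 n s 3 ⟨1, by omega⟩ = s ⟨1, by omega⟩ := by
      rw [hF1out 3 _ (by rw [hi1v]; omega), hT1_3, bhGray_zero]; norm_num
    have hv1D : bhF1 n s 4 ⟨1, by omega⟩ = s ⟨1, by omega⟩ + 1 := by
      rw [hF1out 4 _ (by rw [hi1v]; omega), hT1_4, bhGray_one, if_pos hi1v]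
    have hv2 : ∀ j : ℕ, bhT2 n j = 1 → bhF2 n s j ⟨1, by omega⟩ = s ⟨1, by omega⟩ - 1 := by
      intro j hj
      rw [hF2out j _ (by rw [hi1v]; omega), hj, bhGray_one, if_pos hi1v]
    rw [Set.eq_empty_iff_forall_notMem]
    rintro v ⟨hv1, hv2'⟩
    simp only [Set.mem_insert_iff, Set.mem_singleton_iff] at hv1 hv2'
    have hval2 : v ⟨1, by omega⟩ = s ⟨1, by omega⟩ - 1 := by
      rcases hv2' with rfl | rfl | rfl | rfl
      · exact hv2 1 hT2_1
      · exact hv2 2 hT2_2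
      · exact hv2 3 hT2_3
      · exact hv2 4 hT2_4
    have hval1 : v ⟨1, by omega⟩ = s ⟨1, by omega⟩ ∨
        v ⟨1, by omega⟩ = s ⟨1, by omega⟩ + 1 := by
      rcases hv1 with rfl | rfl | rfl | rfl
      · exact Or.inl hv1A
      · exact Or.inr hv1B
      · exact Or.inl hv1C
      · exact Or.inr hv1D
    rcases hval1 with h | h
    · rw [hval2] at h; exact bhz6 _ h
    · rw [hval2] at h; exact bhz7 _ h
  · -- c₁ = symmetric of a₁
    funext i
    rw [Function.update_apply]
    rcases eq_or_ne i (⟨0, by omega⟩ : Fin n) with hi | hi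
    · rw [if_pos hi, hi, hF1at0 3 _ rfl, hF1at0 1 _ rfl]
      push_cast
      exact bhz10 _
    · have hi0 : i.val ≠ 0 := fun h => hi (Fin.ext h)
      rw [if_neg hi, hF1out 3 i hi0, hF1out 1 i hi0, hT1_3, hT1_1]
  · -- d₁ = symmetric of b₁
    funext i
    rw [Function.update_apply]
    rcases eq_or_ne i (⟨0, by omega⟩ : Fin n) with hi | hi
    · rw [if_pos hi, hi, hF1at0 4 _ rfl, hF1at0 2 _ rfl]
      push_cast
      exact bhz11 _
    · have hi0 : i.val ≠ 0 := fun h => hi (Fin.ext h)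
      rw [if_neg hi, hF1out 4 i hi0, hF1out 2 i hi0, hT1_4, hT1_2]
  · -- c₂ = symmetric of a₂
    funext i
    rw [Function.update_apply]
    rcases eq_or_ne i (⟨0, by omega⟩ : Fin n) with hi | hi
    · rw [if_pos hi, hi, hF2at0 3 _ rfl, hF2at0 1 _ rfl]
      push_cast
      exact bhz8 _
    · have hi0 : i.val ≠ 0 := fun h => hi (Fin.ext h)
      rw [if_neg hi, hF2out 3 i hi0, hF2out 1 i hi0, hT2_3, hT2_1]
  · -- d₂ = symmetric of b₂
    funext i
    rw [Function.update_apply]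
    rcases eq_or_ne i (⟨0, by omega⟩ : Fin n) with hi | hi
    · rw [if_pos hi, hi, hF2at0 4 _ rfl, hF2at0 2 _ rfl]
      push_cast
      exact bhz9 _
    · have hi0 : i.val ≠ 0 := fun h => hi (Fin.ext h)
      rw [if_neg hi, hF2out 4 i hi0, hF2out 2 i hi0, hT2_4, hT2_2]
  · -- Hamiltonian cycle through ⟨s,a₁,b₁,c₁,d₁⟩
    have hL16 : 16 ≤ 4 ^ n := by
      calc (16:ℕ) = 4 ^ 2 := by norm_num
      _ ≤ 4 ^ n := Nat.pow_le_pow_right (by norm_num) hn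
    have hcard : Fintype.card (Fin n → ZMod 4) = 4 ^ n := by
      rw [Fintype.card_fun]
      simp
    have hper1 : bhF1 n s (4 ^ n) = bhF1 n s 0 := by
      have := bhF1_per n hn s 0
      rwa [Nat.zero_add] at this
    obtain ⟨H, hham, hsupp⟩ := bh_ham_of (G := BH n) (bhF1 n s) (bhF1_adj n hn s hs')
      (4 ^ n) hL16 hcard hper1 (fun j j' hj hj' h => bhF1_inj n hn s j j' hj hj' h)
    refine ⟨H.copy hF1_0 hF1_0, ?_, ?_⟩
    · rw [SimpleGraph.Walk.isHamiltonianCycle_iff_isCycle_and_support_count_tail_eq_one]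
      constructor
      · exact (SimpleGraph.Walk.isCycle_copy H hF1_0).mpr hham.isCycle
      · intro v
        rw [SimpleGraph.Walk.support_copy]
        exact ((SimpleGraph.Walk.isHamiltonianCycle_iff_isCycle_and_support_count_tail_eq_one).mp
          hham).2 v
    · rw [SimpleGraph.Walk.support_copy, hsupp]
      have htake : (List.range (4 ^ n + 1)).take 5 = [0, 1, 2, 3, 4] := by
        rw [List.take_range, min_eq_left (by omega)]
        rfl
      have h5 : [s, bhF1 n s 1, bhF1 n s 2, bhF1 n s 3, bhF1 n s 4]
          = ((List.range (4 ^ n + 1)).map (bhF1 n s)).take 5 := by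
        rw [← List.map_take, htake]
        simp [hF1_0]
      rw [h5]
      exact List.take_prefix 5 _
  · -- Hamiltonian cycle through ⟨s,a₂,b₂,c₂,d₂⟩
    have hL16 : 16 ≤ 4 ^ n := by
      calc (16:ℕ) = 4 ^ 2 := by norm_num
      _ ≤ 4 ^ n := Nat.pow_le_pow_right (by norm_num) hn
    have hcard : Fintype.card (Fin n → ZMod 4) = 4 ^ n := by
      rw [Fintype.card_fun]
      simp
    have hper2 : bhF2 n s (4 ^ n) = bhF2 n s 0 := by
      have := bhF2_per n hn s 0
      rwa [Nat.zero_add] at this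
    obtain ⟨H, hham, hsupp⟩ := bh_ham_of (G := BH n) (bhF2 n s) (bhF2_adj n hn s hs')
      (4 ^ n) hL16 hcard hper2 (fun j j' hj hj' h => bhF2_inj n hn s j j' hj hj' h)
    refine ⟨H.copy hF2_0 hF2_0, ?_, ?_⟩
    · rw [SimpleGraph.Walk.isHamiltonianCycle_iff_isCycle_and_support_count_tail_eq_one]
      constructor
      · exact (SimpleGraph.Walk.isCycle_copy H hF2_0).mpr hham.isCycle
      · intro v
        rw [SimpleGraph.Walk.support_copy]
        exact ((SimpleGraph.Walk.isHamiltonianCycle_iff_isCycle_and_support_count_tail_eq_one).mp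
          hham).2 v
    · rw [SimpleGraph.Walk.support_copy, hsupp]
      have htake : (List.range (4 ^ n + 1)).take 5 = [0, 1, 2, 3, 4] := by
        rw [List.take_range, min_eq_left (by omega)]
        rfl
      have h5 : [s, bhF2 n s 1, bhF2 n s 2, bhF2 n s 3, bhF2 n s 4]
          = ((List.range (4 ^ n + 1)).map (bhF2 n s)).take 5 := by
        rw [← List.map_take, htake]
        simp [hF2_0]
      rw [h5]
      exact List.take_prefix 5 _
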